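/- Let {p_i, ρ_i}_{i=1}^m be an ensemble of density operators, let {Π_i}_{i=1}^m be a POVM, and let Z = Σ_{i=1}^m p_i Π_i ρ_i, assuming also Z = Σ_{i=1}^m p_i ρ_i Π_i and that Z is positive definite. Suppose (Z − p_i ρ_i) Π_i = 0 for all i. Define q_i σ_i = Z Π_i Z / Tr(Z²) and σ = Σ_i q_i σ_i. Then σ = Z²/Tr(Z²), and the PGM of the ensemble {q_i, σ_i}, namely E_i = σ^{-1/2}(q_i σ_i) σ^{-1/2}, satisfies E_i = Π_i for all i. -/

import Mathlib

open Matrix BigOperators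
open scoped ComplexOrder

/-- The square root of a positive semidefinite matrix, as defined in the older Mathlib
(`Matrix.PosSemidef.sqrt`, removed since). -/
noncomputable def Matrix.PosSemidef.sqrt {n : Type*} [Fintype n] [DecidableEq n] {𝕜 : Type*}
    [RCLike 𝕜] {A : Matrix n n 𝕜} (hA : A.PosSemidef) : Matrix n n 𝕜 :=
  hA.1.eigenvectorUnitary.1 * diagonal ((↑) ∘ (√·) ∘ hA.1.eigenvalues) *
  (star hA.1.eigenvectorUnitary : Matrix n n 𝕜)

/-- If `(Π i, Z)` is an optimal dual pair (with `Z > 0`), then the ensemble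
`q i σ i = Z Π i Z / Tr(Z²)` has average state `σ = Z²/Tr(Z²)` and its PGM recovers `Π i`. -/
theorem stmt_2 {d m : ℕ} (p : Fin m → ℝ) (ρ Pr : Fin m → Matrix (Fin d) (Fin d) ℂ)
    (hp : ∀ i, 0 < p i) (hpsum : ∑ i, p i = 1)
    (hρ : ∀ i, (ρ i).PosSemidef) (hρtr : ∀ i, (ρ i).trace = 1)
    (hPr : ∀ i, (Pr i).PosSemidef) (hPrsum : ∑ i, Pr i = 1)
    (Z : Matrix (Fin d) (Fin d) ℂ)
    (hZ1 : Z = ∑ i, (p i : ℂ) • (Pr i * ρ i))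
    (hZ2 : Z = ∑ i, (p i : ℂ) • (ρ i * Pr i))
    (hZpd : Z.PosDef)
    (hopt : ∀ i, (Z - (p i : ℂ) • ρ i) * Pr i = 0)
    (hσ : (∑ i, ((Z ^ 2).trace)⁻¹ • (Z * Pr i * Z)).PosSemidef) :
    (∑ i, ((Z ^ 2).trace)⁻¹ • (Z * Pr i * Z)) = ((Z ^ 2).trace)⁻¹ • Z ^ 2 ∧
    ∀ i, hσ.sqrt⁻¹ * (((Z ^ 2).trace)⁻¹ • (Z * Pr i * Z)) * hσ.sqrt⁻¹ = Pr i := by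
  have hsum : (∑ i, ((Z ^ 2).trace)⁻¹ • (Z * Pr i * Z)) = ((Z ^ 2).trace)⁻¹ • Z ^ 2 := by
    rw [← Finset.smul_sum]
    congr 1
    calc ∑ i, Z * Pr i * Z = Z * (∑ i, Pr i) * Z := by
          rw [Finset.mul_sum, Finset.sum_mul]
        _ = Z ^ 2 := by rw [hPrsum, mul_one, sq]
  refine ⟨hsum, ?_⟩
  rcases Nat.eq_zero_or_pos d with hd | hd
  · intro i
    subst hd
    ext a b
    exact a.elim0
  have hne : Nonempty (Fin d) := ⟨⟨0, hd⟩⟩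
  -- trace of Z^2 is a positive real r
  set r : ℝ := ∑ i, ∑ j, Complex.normSq (Z j i) with hr_def
  have htr : (Z ^ 2).trace = (r : ℂ) := by
    rw [sq]
    nth_rewrite 1 [← hZpd.isHermitian.eq]
    rw [Matrix.trace, hr_def]
    push_cast
    refine Finset.sum_congr rfl fun i _ => ?_
    rw [Matrix.diag_apply, Matrix.mul_apply]
    refine Finset.sum_congr rfl fun j _ => ?_
    rw [Matrix.conjTranspose_apply]
    simp [Complex.star_def, ← Complex.normSq_eq_conj_mul_self]
  have hr0 : 0 ≤ r := Finset.sum_nonneg fun _ _ =>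
    Finset.sum_nonneg fun _ _ => Complex.normSq_nonneg _
  have hrne : r ≠ 0 := by
    intro h
    have hZ0 : Z = 0 := by
      ext j i
      have h2 : ∀ i ∈ Finset.univ, ∑ j, Complex.normSq (Z j i) = 0 :=
        (Finset.sum_eq_zero_iff_of_nonneg (fun _ _ =>
          Finset.sum_nonneg fun _ _ => Complex.normSq_nonneg _)).mp h
      have h3 : ∀ j ∈ Finset.univ, Complex.normSq (Z j i) = 0 :=
        (Finset.sum_eq_zero_iff_of_nonneg (fun _ _ => Complex.normSq_nonneg _)).mp
          (h2 i (Finset.mem_univ i))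
      simpa using Complex.normSq_eq_zero.mp (h3 j (Finset.mem_univ j))
    have hdp := hZpd.det_pos
    rw [hZ0, Matrix.det_zero] at hdp
    exact lt_irrefl _ hdp
  have hrpos : 0 < r := lt_of_le_of_ne hr0 (Ne.symm hrne)
  -- the square root of σ is (√(r⁻¹)) • Z
  set s : ℝ := Real.sqrt r⁻¹ with hs_def
  have hspos : 0 < s := Real.sqrt_pos.mpr (inv_pos.mpr hrpos)
  have hBherm : ((s : ℂ) • Z).IsHermitian := by
    unfold Matrix.IsHermitian
    rw [Matrix.conjTranspose_smul, hZpd.isHermitian.eq]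
    congr 1
    simp
  have hBpsd : ((s : ℂ) • Z).PosSemidef := by
    refine ⟨hBherm, fun x => ?_⟩
    have h1 : (0 : ℂ) ≤ (s : ℂ) := by
      rw [Complex.zero_le_real]
      exact hspos.le
    exact (hZpd.posSemidef.smul h1).2 x
  have hs2 : ((s : ℂ)) ^ 2 = ((r : ℂ))⁻¹ := by
    rw [← Complex.ofReal_pow, Real.sq_sqrt (inv_pos.mpr hrpos).le, Complex.ofReal_inv]
  have hsq : ((s : ℂ) • Z) ^ 2 = ∑ i, ((Z ^ 2).trace)⁻¹ • (Z * Pr i * Z) := by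
    rw [hsum, smul_pow, htr, hs2]
  have hsqrt : hσ.sqrt = (s : ℂ) • Z := by
    open scoped MatrixOrder in
    rw [show hσ.sqrt = CFC.sqrt (∑ i, ((Z ^ 2).trace)⁻¹ • (Z * Pr i * Z)) by
      rw [CFC.sqrt_eq_real_sqrt _ hσ.nonneg, cfcₙ_eq_cfc, hσ.1.cfc_eq]
      simp [Matrix.PosSemidef.sqrt, IsHermitian.cfc, Unitary.conjStarAlgAut_apply]]
    open scoped MatrixOrder in
    exact CFC.sqrt_unique (by rw [← sq, hsq]) hBpsd.nonneg
  have hdet : IsUnit Z.det := hZpd.det_pos.ne'.isUnit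
  have hZinv : Z⁻¹ * Z = 1 := Matrix.nonsing_inv_mul Z hdet
  have hZinv' : Z * Z⁻¹ = 1 := Matrix.mul_nonsing_inv Z hdet
  have hsne : (s : ℂ) ≠ 0 := Complex.ofReal_ne_zero.mpr hspos.ne'
  have hrneC : (r : ℂ) ≠ 0 := Complex.ofReal_ne_zero.mpr hrne
  have hinv : hσ.sqrt⁻¹ = (s : ℂ)⁻¹ • Z⁻¹ := by
    rw [hsqrt]
    apply Matrix.inv_eq_left_inv
    rw [Matrix.smul_mul, Matrix.mul_smul, smul_smul, hZinv, inv_mul_cancel₀ hsne, one_smul]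
  intro i
  rw [hinv, htr]
  have hmid : Z⁻¹ * (Z * Pr i * Z) * Z⁻¹ = Pr i := by
    rw [mul_assoc Z (Pr i) Z, ← mul_assoc Z⁻¹ Z, hZinv, one_mul, mul_assoc, hZinv', mul_one]
  simp only [Matrix.smul_mul, Matrix.mul_smul, smul_smul]
  rw [hmid]
  have h1 : (s : ℂ)⁻¹ * (s : ℂ)⁻¹ = (r : ℂ) := by
    rw [← mul_inv, ← sq, hs2, inv_inv]
  have hscal : (s : ℂ)⁻¹ * ((r : ℂ))⁻¹ * (s : ℂ)⁻¹ = 1 := by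
    calc (s : ℂ)⁻¹ * ((r : ℂ))⁻¹ * (s : ℂ)⁻¹
        = (s : ℂ)⁻¹ * (s : ℂ)⁻¹ * ((r : ℂ))⁻¹ := by ring
      _ = 1 := by rw [h1, mul_inv_cancel₀ hrneC]
  rw [show ∀ (a b c : ℂ), a * (b * c) = a * b * c from fun a b c => (mul_assoc a b c).symm] at *
  rw [hscal, one_smul]
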